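/- arXiv:0810.2114 — 14 statements merged into one kernel-verified Lean document; each statement's English description precedes it below -/
import Mathlib

section
/- Let G be a commutative group, f a bijection of G, and Q = G(f) the loop on the disjoint union G ∪ Ḡ with multiplication x*y = xy, x*ȳ = (xy)‾, x̄*y = (xy)‾, x̄*ȳ = f(xy). Then Q is a group if and only if f is a translation of G, i.e. f(x) = x·f(1) for all x ∈ G. -/
def gfMul {G : Type*} [CommGroup G] (f : G → G) : G ⊕ G → G ⊕ G → G ⊕ G
  | Sum.inl x, Sum.inl y => Sum.inl (x * y)
  | Sum.inl x, Sum.inr y => Sum.inr (x * y)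
  | Sum.inr x, Sum.inl y => Sum.inr (x * y)
  | Sum.inr x, Sum.inr y => Sum.inl (f (x * y))

theorem stmt_0 {G : Type*} [CommGroup G] (f : G → G) (hf : Function.Bijective f) :
    (∀ a b c : G ⊕ G, gfMul f (gfMul f a b) c = gfMul f a (gfMul f b c)) ↔
      (∀ x : G, f x = x * f 1) := by
  constructor
  · intro h x
    have := h (Sum.inl x) (Sum.inr 1) (Sum.inr 1)
    simpa [gfMul] using this
  · intro h a b c
    obtain ⟨k, hk⟩ : ∃ k, ∀ x : G, f x = x * k := ⟨f 1, h⟩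
    rcases a with x | x <;> rcases b with y | y <;> rcases c with z | z <;>
      simp [gfMul, hk, mul_assoc, mul_comm, mul_left_comm]
end

section
/- Let G be a commutative group and f a bijection of G such that the loop Q = G(f) is not a group. Then the left nucleus of Q is contained in G, and it equals {x ∈ G : f(xy) = x·f(y) for all y ∈ G}. -/
theorem stmt_1 {G : Type*} [CommGroup G] (f : G → G) (hf : Function.Bijective f)
    (hna : ¬ ∀ a b c : G ⊕ G, gfMul f (gfMul f a b) c = gfMul f a (gfMul f b c)) :
    {a : G ⊕ G | ∀ b c : G ⊕ G, gfMul f a (gfMul f b c) = gfMul f (gfMul f a b) c} =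
      Sum.inl '' {x : G | ∀ y : G, f (x * y) = x * f y} := by
  ext a
  simp only [Set.mem_setOf_eq, Set.mem_image]
  constructor
  · intro ha
    cases a with
    | inl x =>
      refine ⟨x, fun y => ?_, rfl⟩
      have h := ha (Sum.inr 1) (Sum.inr y)
      simp only [gfMul, one_mul, mul_one, Sum.inl.injEq] at h
      exact h.symm
    | inr x =>
      exfalso
      apply hna
      have h3 : ∀ u z : G, f (u * z) = f u * z := by
        intro u z
        have h := ha (Sum.inr (x⁻¹ * u)) (Sum.inl z)
        simp only [gfMul, Sum.inl.injEq, mul_assoc, mul_inv_cancel_left] at h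
        exact h
      obtain ⟨c, hc⟩ : ∃ c : G, ∀ u : G, f u = c * u :=
        ⟨f 1, fun u => by rw [← one_mul u, h3, one_mul]⟩
      intro b c' d
      cases b <;> cases c' <;> cases d <;>
        simp [gfMul, hc, mul_assoc, mul_comm, mul_left_comm]
  · rintro ⟨x, hx, rfl⟩
    intro b c
    cases b <;> cases c <;>
      simp only [gfMul, Sum.inl.injEq, Sum.inr.injEq, mul_assoc]
    rename_i y z
    rw [hx (y * z)]
end

section
/- Let G be a commutative group and f₁, f₂ bijections of G such that neither G(f₁) nor G(f₂) is a group. If f₁ and f₂ are conjugate in Aut(G) (i.e., f₂ = ψ f₁ ψ⁻¹ for some automorphism ψ of G), then the loops G(f₁) and G(f₂) are isomorphic. -/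
theorem stmt_3 {G : Type*} [CommGroup G] (f₁ f₂ : G → G)
    (hf₁ : Function.Bijective f₁) (hf₂ : Function.Bijective f₂)
    (hna₁ : ¬ ∀ a b c : G ⊕ G, gfMul f₁ (gfMul f₁ a b) c = gfMul f₁ a (gfMul f₁ b c))
    (hna₂ : ¬ ∀ a b c : G ⊕ G, gfMul f₂ (gfMul f₂ a b) c = gfMul f₂ a (gfMul f₂ b c))
    (ψ : G ≃* G) (hconj : ∀ x : G, f₂ x = ψ (f₁ (ψ.symm x))) :
    ∃ φ : (G ⊕ G) ≃ (G ⊕ G), ∀ a b : G ⊕ G,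
      φ (gfMul f₁ a b) = gfMul f₂ (φ a) (φ b) := by
  refine ⟨Equiv.sumCongr ψ.toEquiv ψ.toEquiv, ?_⟩
  rintro (a | a) (b | b) <;> simp [gfMul, hconj]
end

section
/- Let G be a commutative group and f₁, f₂ bijections of G with f₁(1) = 1 = f₂(1), such that neither G(f₁) nor G(f₂) is a group. Then G(f₁) ≅ G(f₂) if and only if f₁ and f₂ are conjugate in Aut(G). -/
section auxGf

variable {G : Type*} [CommGroup G]

lemma gf_ll (f : G → G) (x y : G) : gfMul f (Sum.inl x) (Sum.inl y) = Sum.inl (x * y) := rfl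
lemma gf_lr (f : G → G) (x y : G) : gfMul f (Sum.inl x) (Sum.inr y) = Sum.inr (x * y) := rfl
lemma gf_rl (f : G → G) (x y : G) : gfMul f (Sum.inr x) (Sum.inl y) = Sum.inr (x * y) := rfl
lemma gf_rr (f : G → G) (x y : G) : gfMul f (Sum.inr x) (Sum.inr y) = Sum.inl (f (x * y)) := rfl

lemma gf_assoc_of_id {f : G → G} (hf : ∀ x, f x = x) :
    ∀ a b c : G ⊕ G, gfMul f (gfMul f a b) c = gfMul f a (gfMul f b c) := by
  rintro (a | a) (b | b) (c | c) <;>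
    simp [gf_ll, gf_lr, gf_rl, gf_rr, hf, mul_assoc]

lemma phi_inl_one {f₁ f₂ : G → G} (φ : (G ⊕ G) ≃ (G ⊕ G))
    (hφ : ∀ a b : G ⊕ G, φ (gfMul f₁ a b) = gfMul f₂ (φ a) (φ b)) :
    φ (Sum.inl 1) = Sum.inl 1 := by
  have hid : ∀ b : G ⊕ G, gfMul f₂ (φ (Sum.inl 1)) b = b := by
    intro b
    obtain ⟨a, rfl⟩ := φ.surjective b
    have h := hφ (Sum.inl 1) a
    have e1 : gfMul f₁ (Sum.inl 1) a = a := by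
      rcases a with x | x <;> simp [gf_ll, gf_lr]
    rw [e1] at h
    exact h.symm
  rcases h : φ (Sum.inl 1) with e | e
  · have h2 := hid (Sum.inr 1)
    rw [h, gf_lr] at h2
    have h3 : e = 1 := by simpa using Sum.inr_injective h2
    rw [h3]
  · have h2 := hid (Sum.inl 1)
    rw [h, gf_rl] at h2
    exact absurd h2 (by simp)

/-- Case (i): if φ(inr 1) lands in the left copy, then f₁ = id. -/
lemma case_i {f₁ f₂ : G → G} (h₁ : f₁ 1 = 1) (φ : (G ⊕ G) ≃ (G ⊕ G))
    (hφ : ∀ a b : G ⊕ G, φ (gfMul f₁ a b) = gfMul f₂ (φ a) (φ b))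
    (h10 : φ (Sum.inl 1) = Sum.inl 1) {a₀ : G}
    (hr : φ (Sum.inr 1) = Sum.inl a₀) : ∀ w, f₁ w = w := by
  have key2 : ∀ x y : G, φ (Sum.inr (x * y)) = gfMul f₂ (φ (Sum.inl x)) (φ (Sum.inr y)) :=
    fun x y => hφ (Sum.inl x) (Sum.inr y)
  have key3 : ∀ x y : G, φ (Sum.inl (f₁ (x * y))) = gfMul f₂ (φ (Sum.inr x)) (φ (Sum.inr y)) :=
    fun x y => hφ (Sum.inr x) (Sum.inr y)
  have ha2 : a₀ * a₀ = 1 := by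
    have h := key3 1 1
    rw [mul_one, h₁, h10, hr, gf_ll] at h
    exact (Sum.inl_injective h).symm
  intro w
  have hw1 : φ (Sum.inr w) = gfMul f₂ (φ (Sum.inl w)) (Sum.inl a₀) := by
    have h := key2 w 1
    rw [mul_one, hr] at h
    exact h
  have hfw : φ (Sum.inl (f₁ w)) = gfMul f₂ (φ (Sum.inr w)) (Sum.inl a₀) := by
    have h := key3 w 1
    rw [mul_one, hr] at h
    exact h
  rcases hb : φ (Sum.inl w) with b | b
  · rw [hb, gf_ll] at hw1
    rw [hw1, gf_ll] at hfw
    have : φ (Sum.inl (f₁ w)) = φ (Sum.inl w) := by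
      rw [hfw, hb, mul_assoc, ha2, mul_one]
    exact Sum.inl_injective (φ.injective this)
  · rw [hb, gf_rl] at hw1
    rw [hw1, gf_rl] at hfw
    have : φ (Sum.inl (f₁ w)) = φ (Sum.inl w) := by
      rw [hfw, hb, mul_assoc, ha2, mul_one]
    exact Sum.inl_injective (φ.injective this)

/-- Case (ii): if φ(inr 1) lands in the right copy but some φ(inl d) lands in the
right copy, then f₁ = id. -/
lemma case_ii {f₁ f₂ : G → G} (h₁ : f₁ 1 = 1) (φ : (G ⊕ G) ≃ (G ⊕ G))
    (hφ : ∀ a b : G ⊕ G, φ (gfMul f₁ a b) = gfMul f₂ (φ a) (φ b))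
    (h10 : φ (Sum.inl 1) = Sum.inl 1) {k d g : G}
    (hr : φ (Sum.inr 1) = Sum.inr k)
    (hd : φ (Sum.inl d) = Sum.inr g) : ∀ w, f₁ w = w := by
  have key1 : ∀ x y : G, φ (Sum.inl (x * y)) = gfMul f₂ (φ (Sum.inl x)) (φ (Sum.inl y)) :=
    fun x y => hφ (Sum.inl x) (Sum.inl y)
  have key2 : ∀ x y : G, φ (Sum.inr (x * y)) = gfMul f₂ (φ (Sum.inl x)) (φ (Sum.inr y)) :=
    fun x y => hφ (Sum.inl x) (Sum.inr y)
  have key3 : ∀ x y : G, φ (Sum.inl (f₁ (x * y))) = gfMul f₂ (φ (Sum.inr x)) (φ (Sum.inr y)) :=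
    fun x y => hφ (Sum.inr x) (Sum.inr y)
  -- f₂ (k*k) = 1
  have c1 : f₂ (k * k) = 1 := by
    have h := key3 1 1
    rw [mul_one, h₁, h10, hr, gf_rr] at h
    exact (Sum.inl_injective h).symm
  -- φ (inr d) = inl (f₂ (g*k))
  have hrd : φ (Sum.inr d) = Sum.inl (f₂ (g * k)) := by
    have h := key2 d 1
    rw [mul_one, hd, hr, gf_rr] at h
    exact h
  -- φ (inl d⁻¹) = inr (k*k*g⁻¹)
  have hdi : φ (Sum.inl d⁻¹) = Sum.inr (k * k * g⁻¹) := by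
    obtain ⟨a, ha⟩ := φ.surjective (Sum.inr (k * k * g⁻¹))
    rcases a with x | x
    · have e3 : φ (Sum.inl (x * d)) = Sum.inl 1 := by
        have h := key1 x d
        rw [ha, hd, gf_rr] at h
        rw [h, inv_mul_cancel_right, c1]
      have hx : x * d = 1 := Sum.inl_injective (φ.injective (e3.trans h10.symm))
      have hx2 : x = d⁻¹ := mul_eq_one_iff_eq_inv.mp hx
      rw [← hx2]
      exact ha
    · rcases hb : φ (Sum.inl x) with b | b
      · have e2 : φ (Sum.inr x) = Sum.inr (b * k) := by
          have h := key2 x 1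
          rw [mul_one, hb, hr, gf_lr] at h
          exact h
        have hbk : b * k = k * k * g⁻¹ := Sum.inr_injective (e2.symm.trans ha)
        have e3 : φ (Sum.inl (x * d)) = Sum.inr (b * g) := by
          have h := key1 x d
          rw [hb, hd, gf_lr] at h
          exact h
        have hbg : b * g = k := by
          have hb' : b = k * k * g⁻¹ * k⁻¹ := by rw [← hbk]; group
          rw [hb', mul_right_comm (k * k) g⁻¹ k⁻¹]
          group
        have : Sum.inl (x * d) = (Sum.inr 1 : G ⊕ G) := by
          apply φ.injective
          rw [e3, hbg, hr]
        exact absurd this (by simp)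
      · have e2 : φ (Sum.inr x) = Sum.inl (f₂ (b * k)) := by
          have h := key2 x 1
          rw [mul_one, hb, hr, gf_rr] at h
          exact h
        rw [ha] at e2
        exact absurd e2 (by simp)
  -- f₂ (g*k) = g * k⁻¹
  have hF : f₂ (g * k) = g * k⁻¹ := by
    have h := key2 d⁻¹ d
    rw [inv_mul_cancel, hr, hdi, hrd, gf_rl] at h
    have hk : k = k * k * g⁻¹ * f₂ (g * k) := Sum.inr_injective h
    have h9 : k * k * g⁻¹ * f₂ (g * k) = k := hk.symm
    calc f₂ (g * k) = (k * k * g⁻¹)⁻¹ * (k * k * g⁻¹ * f₂ (g * k)) := by group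
      _ = (k * k * g⁻¹)⁻¹ * k := by rw [h9]
      _ = g * k⁻¹ := by group
  -- final
  intro w
  rcases hb : φ (Sum.inl w) with b | b
  · have e1 : φ (Sum.inl (w * d⁻¹)) = Sum.inr (b * (k * k * g⁻¹)) := by
      have h := key1 w d⁻¹
      rw [hb, hdi, gf_lr] at h
      exact h
    have e2 : f₂ (b * (k * k * g⁻¹) * g) = b := by
      have h := key1 (w * d⁻¹) d
      rw [e1, hd, gf_rr, inv_mul_cancel_right, hb] at h
      exact (Sum.inl_injective h).symm
    have e3 : φ (Sum.inr w) = Sum.inr (b * k) := by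
      have h := key2 w 1
      rw [mul_one, hb, hr, gf_lr] at h
      exact h
    have e4 : φ (Sum.inl (f₁ w)) = Sum.inl (f₂ (b * k * k)) := by
      have h := key3 w 1
      rw [mul_one, e3, hr, gf_rr] at h
      exact h
    have e5 : f₂ (b * k * k) = b := by
      have h' : b * k * k = b * (k * k * g⁻¹) * g := by group
      rw [h']; exact e2
    have : φ (Sum.inl (f₁ w)) = φ (Sum.inl w) := by rw [e4, e5, hb]
    exact Sum.inl_injective (φ.injective this)
  · have e1 : φ (Sum.inl (w * d⁻¹)) = Sum.inl (f₂ (b * (k * k * g⁻¹))) := by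
      have h := key1 w d⁻¹
      rw [hb, hdi, gf_rr] at h
      exact h
    have e2 : f₂ (b * (k * k * g⁻¹)) * g = b := by
      have h := key1 (w * d⁻¹) d
      rw [e1, hd, gf_lr, inv_mul_cancel_right, hb] at h
      exact (Sum.inr_injective h).symm
    have e3 : φ (Sum.inr w) = Sum.inl (f₂ (b * k)) := by
      have h := key2 w 1
      rw [mul_one, hb, hr, gf_rr] at h
      exact h
    have e3' : φ (Sum.inr w) = Sum.inl (f₂ (b * (k * k * g⁻¹)) * f₂ (g * k)) := by
      have h := key2 (w * d⁻¹) d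
      rw [inv_mul_cancel_right, e1, hrd, gf_ll] at h
      exact h
    have ebk : f₂ (b * k) = b * k⁻¹ := by
      have h6 : f₂ (b * k) = f₂ (b * (k * k * g⁻¹)) * f₂ (g * k) :=
        Sum.inl_injective (e3.symm.trans e3')
      have h7 : f₂ (b * (k * k * g⁻¹)) = b * g⁻¹ := by
        calc f₂ (b * (k * k * g⁻¹)) = f₂ (b * (k * k * g⁻¹)) * g * g⁻¹ := by group
          _ = b * g⁻¹ := by rw [e2]
      rw [h7, hF] at h6
      rw [h6]; group
    have e4 : φ (Sum.inl (f₁ w)) = Sum.inr (f₂ (b * k) * k) := by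
      have h := key3 w 1
      rw [mul_one, e3, hr, gf_lr] at h
      exact h
    have : φ (Sum.inl (f₁ w)) = φ (Sum.inl w) := by
      rw [e4, ebk, hb, inv_mul_cancel_right]
    exact Sum.inl_injective (φ.injective this)

end auxGf

theorem stmt_4 {G : Type*} [CommGroup G] (f₁ f₂ : G → G)
    (hf₁ : Function.Bijective f₁) (hf₂ : Function.Bijective f₂)
    (h₁ : f₁ 1 = 1) (h₂ : f₂ 1 = 1)
    (hna₁ : ¬ ∀ a b c : G ⊕ G, gfMul f₁ (gfMul f₁ a b) c = gfMul f₁ a (gfMul f₁ b c))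
    (hna₂ : ¬ ∀ a b c : G ⊕ G, gfMul f₂ (gfMul f₂ a b) c = gfMul f₂ a (gfMul f₂ b c)) :
    (∃ φ : (G ⊕ G) ≃ (G ⊕ G), ∀ a b : G ⊕ G,
        φ (gfMul f₁ a b) = gfMul f₂ (φ a) (φ b)) ↔
      (∃ ψ : G ≃* G, ∀ x : G, f₂ x = ψ (f₁ (ψ.symm x))) := by
  constructor
  · rintro ⟨φ, hφ⟩
    have h10 : φ (Sum.inl 1) = Sum.inl 1 := phi_inl_one φ hφ
    have hnid : ¬ ∀ w : G, f₁ w = w := fun h => hna₁ (gf_assoc_of_id h)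
    rcases hr1 : φ (Sum.inr 1) with a₀ | k
    · exact absurd (case_i h₁ φ hφ h10 hr1) hnid
    · have hL : ∀ x : G, ∃ b, φ (Sum.inl x) = Sum.inl b := by
        intro x
        rcases hx : φ (Sum.inl x) with b | b
        · exact ⟨b, rfl⟩
        · exact absurd (case_ii h₁ φ hφ h10 hr1 hx) hnid
      choose σ hσ using hL
      have σ1 : σ 1 = 1 := Sum.inl_injective ((hσ 1).symm.trans h10)
      have hmul : ∀ x y, σ (x * y) = σ x * σ y := by
        intro x y
        have h : φ (Sum.inl (x * y)) = gfMul f₂ (φ (Sum.inl x)) (φ (Sum.inl y)) :=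
          hφ (Sum.inl x) (Sum.inl y)
        rw [hσ x, hσ y, hσ (x * y), gf_ll] at h
        exact Sum.inl_injective h
      have hinj : Function.Injective σ := by
        intro x y h
        have : φ (Sum.inl x) = φ (Sum.inl y) := by rw [hσ, hσ, h]
        exact Sum.inl_injective (φ.injective this)
      have hrx : ∀ x : G, φ (Sum.inr x) = Sum.inr (σ x * k) := by
        intro x
        have h : φ (Sum.inr (x * 1)) = gfMul f₂ (φ (Sum.inl x)) (φ (Sum.inr 1)) :=
          hφ (Sum.inl x) (Sum.inr 1)
        rw [mul_one, hσ x, hr1, gf_lr] at h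
        exact h
      have hsurj : Function.Surjective σ := by
        intro y
        obtain ⟨a, ha⟩ := φ.surjective (Sum.inl y)
        rcases a with x | x
        · exact ⟨x, Sum.inl_injective ((hσ x).symm.trans ha)⟩
        · rw [hrx x] at ha
          exact absurd ha (by simp)
      let ψ : G ≃* G := MulEquiv.ofBijective (MonoidHom.mk' σ hmul) ⟨hinj, hsurj⟩
      refine ⟨ψ, ?_⟩
      have h7 : ∀ w, σ (f₁ w) = f₂ (σ w * k * k) := by
        intro w
        have h : φ (Sum.inl (f₁ (w * 1))) = gfMul f₂ (φ (Sum.inr w)) (φ (Sum.inr 1)) :=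
          hφ (Sum.inr w) (Sum.inr 1)
        rw [mul_one, hrx w, hr1, gf_rr, hσ] at h
        exact Sum.inl_injective h
      have hk2 : k * k = 1 := by
        obtain ⟨w₀, hw₀⟩ := hsurj ((k * k)⁻¹)
        have h8 := h7 w₀
        rw [hw₀, show (k * k)⁻¹ * k * k = 1 by group, h₂] at h8
        have hfw : f₁ w₀ = 1 := hinj (h8.trans σ1.symm)
        have hw1 : w₀ = 1 := hf₁.injective (hfw.trans h₁.symm)
        rw [hw1, σ1] at hw₀
        exact (inv_eq_one.mp hw₀.symm)
      intro x
      have hψs : σ (ψ.symm x) = x := ψ.apply_symm_apply x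
      have h9 := h7 (ψ.symm x)
      rw [hψs, mul_assoc, hk2, mul_one] at h9
      exact h9.symm
  · rintro ⟨ψ, hψ⟩
    refine ⟨Equiv.sumCongr ψ.toEquiv ψ.toEquiv, ?_⟩
    rintro (x | x) (y | y)
    · show Sum.inl (ψ (x * y)) = Sum.inl (ψ x * ψ y)
      rw [map_mul]
    · show Sum.inr (ψ (x * y)) = Sum.inr (ψ x * ψ y)
      rw [map_mul]
    · show Sum.inr (ψ (x * y)) = Sum.inr (ψ x * ψ y)
      rw [map_mul]
    · show Sum.inl (ψ (f₁ (x * y))) = Sum.inl (f₂ (ψ x * ψ y))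
      have h : f₂ (ψ x * ψ y) = ψ (f₁ (x * y)) := by
        rw [← map_mul, hψ (ψ (x * y)), MulEquiv.symm_apply_apply]
      rw [h]
end

section
/- Let G be a commutative group, f₂ an automorphism of G, t a square in G, and define f₁(x) = f₂(x)·t. If G(f₁) and G(f₂) are not groups, then G(f₁) is isomorphic to G(f₂). -/
theorem stmt_5 {G : Type*} [CommGroup G] (f₂ : G ≃* G) (t u : G) (ht : t = u * u)
    (f₁ : G → G) (hf₁ : ∀ x : G, f₁ x = f₂ x * t)
    (hna₁ : ¬ ∀ a b c : G ⊕ G, gfMul f₁ (gfMul f₁ a b) c = gfMul f₁ a (gfMul f₁ b c))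
    (hna₂ : ¬ ∀ a b c : G ⊕ G,
      gfMul (⇑f₂) (gfMul (⇑f₂) a b) c = gfMul (⇑f₂) a (gfMul (⇑f₂) b c)) :
    ∃ φ : (G ⊕ G) ≃ (G ⊕ G), ∀ a b : G ⊕ G,
      φ (gfMul f₁ a b) = gfMul (⇑f₂) (φ a) (φ b) := by
  refine ⟨Equiv.sumCongr (Equiv.refl G) (Equiv.mulRight (f₂.symm u)), ?_⟩
  rintro (x | x) (y | y) <;>
    simp [gfMul, hf₁, ht, map_mul, mul_comm, mul_assoc, mul_left_comm]
end

section
/- Let G be a commutative group and f a bijection of G. Then f satisfies (i) f(xy) = f(x)f(y)f(1)⁻¹, (ii) f(x²) = x²f(1), and (iii) f(f(1)) = f(1)², for all x, y ∈ G, if and only if there exist g ∈ Aut(G) and t ∈ G such that f(x) = g(x)·t for all x, g(x²) = x² for all x ∈ G, and g(t) = t. -/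
theorem stmt_7 {G : Type*} [CommGroup G] (f : G → G) (hf : Function.Bijective f) :
    ((∀ x y : G, f (x * y) = f x * f y * (f 1)⁻¹) ∧
      (∀ x : G, f (x ^ 2) = x ^ 2 * f 1) ∧
      f (f 1) = (f 1) ^ 2) ↔
    (∃ (g : G ≃* G) (t : G), (∀ x : G, f x = g x * t) ∧
      (∀ x : G, g (x ^ 2) = x ^ 2) ∧ g t = t) := by
  constructor
  · rintro ⟨h1, h2, h3⟩
    have hom : ∀ x y : G, f (x * y) * (f 1)⁻¹ = (f x * (f 1)⁻¹) * (f y * (f 1)⁻¹) := by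
      intro x y
      rw [h1]
      simp [mul_assoc, mul_comm, mul_left_comm]
    let g0 : G →* G :=
      { toFun := fun x => f x * (f 1)⁻¹
        map_one' := by simp
        map_mul' := hom }
    have hbij : Function.Bijective g0 := by
      have : (fun x => f x * (f 1)⁻¹) = (fun y => y * (f 1)⁻¹) ∘ f := rfl
      show Function.Bijective (fun x => f x * (f 1)⁻¹)
      rw [this]
      exact (Equiv.mulRight (f 1)⁻¹).bijective.comp hf
    refine ⟨MulEquiv.ofBijective g0 hbij, f 1, ?_, ?_, ?_⟩
    · intro x; show f x = f x * (f 1)⁻¹ * f 1; group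
    · intro x; show f (x ^ 2) * (f 1)⁻¹ = x ^ 2; rw [h2]; group
    · show f (f 1) * (f 1)⁻¹ = f 1; rw [h3]; group
  · rintro ⟨g, t, hft, hsq, hgt⟩
    have h1 : f 1 = t := by simpa using hft 1
    refine ⟨?_, ?_, ?_⟩
    · intro x y
      simp only [hft, h1, map_mul]
      simp [mul_assoc, mul_comm, mul_left_comm]
    · intro x
      rw [hft, hsq, h1]
    · rw [h1, hft, hgt, sq]
end

section
/- Let G be a commutative group and f a bijection of G satisfying f(xy) = f(x)f(y)f(1)⁻¹ and f(x²) = x²f(1) for all x, y ∈ G. Then the identity f(f(x))²·f(x)⁻² = f(f(1)) holds for all x ∈ G if and only if f(f(1)) = f(1)². -/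
theorem stmt_8 {G : Type*} [CommGroup G] (f : G → G) (hf : Function.Bijective f)
    (h1 : ∀ x y : G, f (x * y) = f x * f y * (f 1)⁻¹)
    (h2 : ∀ x : G, f (x ^ 2) = x ^ 2 * f 1) :
    (∀ x : G, f (f x) ^ 2 * (f x)⁻¹ ^ 2 = f (f 1)) ↔ f (f 1) = (f 1) ^ 2 := by
  have hsq : ∀ x : G, f x ^ 2 = x ^ 2 * f 1 ^ 2 := by
    intro x
    have := h1 x x
    rw [← pow_two, h2 x, ← pow_two] at this
    have : x ^ 2 * f 1 * f 1 = f x ^ 2 := by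
      rw [this]; group
    rw [← this]; simp [pow_two, mul_assoc, mul_comm, mul_left_comm]
  have hconst : ∀ x : G, f (f x) ^ 2 * (f x)⁻¹ ^ 2 = f 1 ^ 2 := by
    intro x
    rw [inv_pow, hsq (f x), hsq x]
    simp [pow_two, mul_assoc, mul_comm, mul_left_comm]
  constructor
  · intro h
    rw [← h 1, hconst 1]
  · intro h x
    rw [hconst x, h]
end

section
/- Let V be a vector space over GF(2) of dimension at most 2, and let g : V³ → GF(2) be a trilinear form satisfying g(x,y,z) = g(z,y,x) for all x,y,z ∈ V. Then there exists a nonzero x ∈ V such that the induced bilinear form g(x,−,−) is symmetric. -/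
theorem stmt_11 (n : ℕ) (h1 : 1 ≤ n) (h2 : n ≤ 2)
    (g : (Fin n → ZMod 2) →ₗ[ZMod 2] (Fin n → ZMod 2) →ₗ[ZMod 2]
        (Fin n → ZMod 2) →ₗ[ZMod 2] ZMod 2)
    (hsym : ∀ x y z : Fin n → ZMod 2, g x y z = g z y x) :
    ∃ x : Fin n → ZMod 2, x ≠ 0 ∧ ∀ y z : Fin n → ZMod 2, g x y z = g x z y := by
  interval_cases n
  · -- n = 1
    set e0 : Fin 1 → ZMod 2 := Pi.single 0 1 with he0
    refine ⟨e0, ?_, ?_⟩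
    · intro h
      have := congrFun h 0
      simp [he0, Pi.single] at this
    · intro y z
      have hy : y = y 0 • e0 := by
        funext i; fin_cases i; simp [he0]
      have hz : z = z 0 • e0 := by
        funext i; fin_cases i; simp [he0]
      rw [hy, hz]
      simp only [map_smul, LinearMap.smul_apply, smul_eq_mul]
      ring
  · -- n = 2
    set e0 : Fin 2 → ZMod 2 := Pi.single 0 1 with he0
    set e1 : Fin 2 → ZMod 2 := Pi.single 1 1 with he1
    have hx : ∃ x : Fin 2 → ZMod 2, x ≠ 0 ∧ g x e0 e1 = g x e1 e0 := by
      by_cases h0 : g e0 e0 e1 = g e0 e1 e0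
      · refine ⟨e0, ?_, h0⟩
        intro h
        have := congrFun h 0
        simp [he0, Pi.single] at this
      by_cases hb : g e1 e0 e1 = g e1 e1 e0
      · refine ⟨e1, ?_, hb⟩
        intro h
        have := congrFun h 1
        simp [he1, Pi.single] at this
      · refine ⟨e0 + e1, ?_, ?_⟩
        · intro h
          have := congrFun h 0
          simp [he0, he1, Pi.single] at this
        · have key : ∀ a b : ZMod 2, a ≠ b → a = b + 1 := by decide
          have h0' := key _ _ h0
          have hb' := key _ _ hb
          simp only [map_add, LinearMap.add_apply]
          rw [h0', hb']
          have h2 : (1:ZMod 2) + 1 = 0 := rfl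
          linear_combination h2
    obtain ⟨x, hx0, hxe⟩ := hx
    refine ⟨x, hx0, ?_⟩
    intro y z
    have hy : y = y 0 • e0 + y 1 • e1 := by
      funext i; fin_cases i <;> simp [he0, he1]
    have hz : z = z 0 • e0 + z 1 • e1 := by
      funext i; fin_cases i <;> simp [he0, he1]
    rw [hy, hz]
    simp only [map_add, map_smul, LinearMap.add_apply, LinearMap.smul_apply, smul_eq_mul]
    rw [hxe]
    ring
end

section
/- Let R be a nonzero commutative ring, and define a multiplication on Q = R × R × R by (x₁,x₂,x₃)(y₁,y₂,y₃) = (x₁ + y₁ + (x₂+y₂)x₃y₃, x₂+y₂, x₃+y₃). Then Q is a commutative loop with neutral element (0,0,0), and every left inner mapping L_{y,x} : z ↦ (xy)\\(x(yz)) is given by L_{y,x}(z₁,z₂,z₃) = (z₁ + y₃(x₃z₂ − x₂z₃), z₂, z₃). -/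
/-- The multiplication of the loop `Ter(R)` on `R × R × R`. -/
def terMul {R : Type*} [CommRing R] (x y : R × R × R) : R × R × R :=
  (x.1 + y.1 + (x.2.1 + y.2.1) * x.2.2 * y.2.2, x.2.1 + y.2.1, x.2.2 + y.2.2)

theorem stmt_14 (R : Type*) [CommRing R] [Nontrivial R] :
    (∀ x y : R × R × R, terMul x y = terMul y x) ∧
    (∀ x : R × R × R, terMul (0, 0, 0) x = x) ∧
    (∀ x : R × R × R, Function.Bijective (terMul x)) ∧
    (∀ x : R × R × R, Function.Bijective (fun y => terMul y x)) ∧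
    (∀ x y z : R × R × R,
      terMul (terMul x y)
        (z.1 + y.2.2 * (x.2.2 * z.2.1 - x.2.1 * z.2.2), z.2.1, z.2.2) =
      terMul x (terMul y z)) := by
  refine ⟨fun x y => ?_, fun x => ?_, fun x => ?_, fun x => ?_, fun x y z => ?_⟩
  · simp only [terMul, Prod.mk.injEq]; constructor <;> [ring; constructor <;> ring]
  · simp [terMul]
  · refine Function.bijective_iff_has_inverse.2
      ⟨fun y => (y.1 - x.1 - (x.2.1 + (y.2.1 - x.2.1)) * x.2.2 * (y.2.2 - x.2.2),
        y.2.1 - x.2.1, y.2.2 - x.2.2), fun y => ?_, fun y => ?_⟩ <;>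
      simp only [terMul, Prod.ext_iff] <;>
      refine ⟨by ring, by ring, by ring⟩
  · refine Function.bijective_iff_has_inverse.2
      ⟨fun y => (y.1 - x.1 - ((y.2.1 - x.2.1) + x.2.1) * (y.2.2 - x.2.2) * x.2.2,
        y.2.1 - x.2.1, y.2.2 - x.2.2), fun y => ?_, fun y => ?_⟩ <;>
      simp only [terMul, Prod.ext_iff] <;>
      refine ⟨by ring, by ring, by ring⟩
  · simp only [terMul, Prod.mk.injEq]; refine ⟨by ring, by ring, by ring⟩
end

section
/- Let R be a nonzero commutative ring and Q = R³ with multiplication (x₁,x₂,x₃)(y₁,y₂,y₃) = (x₁ + y₁ + (x₂+y₂)x₃y₃, x₂+y₂, x₃+y₃). Then every left inner mapping of Q is an automorphism of Q, i.e., for all x, y, u, v ∈ Q, (xy)\\(x(y·uv)) = [(xy)\\(x(yu))]·[(xy)\\(x(yv))]. -/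
theorem stmt_15 (R : Type*) [CommRing R] [Nontrivial R] :
    ∀ x y u v a b c : R × R × R,
      terMul (terMul x y) a = terMul x (terMul y (terMul u v)) →
      terMul (terMul x y) b = terMul x (terMul y u) →
      terMul (terMul x y) c = terMul x (terMul y v) →
      a = terMul b c := by
  rintro ⟨x1,x2,x3⟩ ⟨y1,y2,y3⟩ ⟨u1,u2,u3⟩ ⟨v1,v2,v3⟩ ⟨a1,a2,a3⟩ ⟨b1,b2,b3⟩ ⟨c1,c2,c3⟩ h1 h2 h3
  simp only [terMul, Prod.mk.injEq] at *
  obtain ⟨e1, e2, e3⟩ := h1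
  obtain ⟨f1, f2, f3⟩ := h2
  obtain ⟨g1, g2, g3⟩ := h3
  have ha2 : a2 = u2 + v2 := by linear_combination e2
  have ha3 : a3 = u3 + v3 := by linear_combination e3
  have hb2 : b2 = u2 := by linear_combination f2
  have hb3 : b3 = u3 := by linear_combination f3
  have hc2 : c2 = v2 := by linear_combination g2
  have hc3 : c3 = v3 := by linear_combination g3
  subst ha2 ha3 hb2 hb3 hc2 hc3
  refine ⟨?_, rfl, rfl⟩
  linear_combination e1 - f1 - g1
end

section
/- Let R be a nonzero commutative ring and Q = Ter(R) the commutative A-loop on R³ with multiplication (x₁,x₂,x₃)(y₁,y₂,y₃) = (x₁ + y₁ + (x₂+y₂)x₃y₃, x₂+y₂, x₃+y₃). If there exist u, v ∈ R with uv ≠ 0 (e.g., R has a unit), then the middle nucleus of Q equals R × R × 0, the left nucleus and center both equal R × 0 × 0, and in particular Q is nonassociative. -/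
lemma terMul_assoc_iff {R : Type*} [CommRing R] (a b c : R × R × R) :
    terMul a (terMul b c) = terMul (terMul a b) c ↔
      c.2.1 * a.2.2 * b.2.2 = a.2.1 * b.2.2 * c.2.2 := by
  simp only [terMul, Prod.mk.injEq]
  constructor
  · rintro ⟨h1, -, -⟩; linear_combination h1
  · intro h; exact ⟨by linear_combination h, by ring, by ring⟩

theorem stmt_16 (R : Type*) [CommRing R] [Nontrivial R]
    (h : ∃ u v : R, u * v ≠ 0) :
    -- the middle nucleus is R × R × 0
    ({b : R × R × R | ∀ a c : R × R × R,
        terMul a (terMul b c) = terMul (terMul a b) c} = {b | b.2.2 = 0}) ∧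
    -- the left nucleus is R × 0 × 0
    ({a : R × R × R | ∀ b c : R × R × R,
        terMul a (terMul b c) = terMul (terMul a b) c} =
      {a | a.2.1 = 0 ∧ a.2.2 = 0}) ∧
    -- the center is R × 0 × 0
    ({a : R × R × R | (∀ b : R × R × R, terMul a b = terMul b a) ∧
        (∀ b c : R × R × R, terMul a (terMul b c) = terMul (terMul a b) c) ∧
        (∀ b c : R × R × R, terMul b (terMul a c) = terMul (terMul b a) c) ∧
        (∀ b c : R × R × R, terMul b (terMul c a) = terMul (terMul b c) a)} =
      {a | a.2.1 = 0 ∧ a.2.2 = 0}) ∧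
    -- Q is nonassociative
    ¬ ∀ a b c : R × R × R, terMul a (terMul b c) = terMul (terMul a b) c := by
  simp only [terMul_assoc_iff]
  refine ⟨?_, ?_, ?_, ?_⟩
  · ext b
    simp only [Set.mem_setOf_eq]
    constructor
    · intro hb
      have := hb (0, 0, 1) (0, 1, 0)
      simpa using this
    · intro hb a c
      rw [hb]; ring
  · ext a
    simp only [Set.mem_setOf_eq]
    constructor
    · intro ha
      constructor
      · have := ha (0, 0, 1) (0, 0, 1)
        exact (by simpa using this : (0:R) = a.2.1).symm
      · have := ha (0, 0, 1) (0, 1, 0)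
        simpa using this
    · rintro ⟨h1, h2⟩ b c
      rw [h1, h2]; ring
  · ext a
    simp only [Set.mem_setOf_eq]
    constructor
    · rintro ⟨-, ha, -, -⟩
      constructor
      · have := ha (0, 0, 1) (0, 0, 1)
        exact (by simpa using this : (0:R) = a.2.1).symm
      · have := ha (0, 0, 1) (0, 1, 0)
        simpa using this
    · rintro ⟨h1, h2⟩
      refine ⟨fun b => by
        simp only [terMul, Prod.mk.injEq]; exact ⟨by ring, by ring, by ring⟩,
        ?_, ?_, ?_⟩ <;> intro b c <;> simp [h1, h2]
  · intro hall
    have := hall (0, 0, 1) (0, 0, 1) (0, 1, 0)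
    simpa using this
end

section
/- For an odd prime p and a, b ∈ Z_p, let Q = Terg(Z_p; a, b) be the loop on Z_p³ with multiplication (x₁,x₂,x₃)(y₁,y₂,y₃) = (x₁+y₁+(x₂+y₂)x₃y₃ + a(x₂,y₂)_p + b(x₃,y₃)_p, x₂+y₂, x₃+y₃), where (·,·)_p is the overflow indicator. Then for every m ≥ 0 and x = (x₁,x₂,x₃) ∈ Q, the m-th power of x is x^m = (m x₁ + 2·C(m+1,3)·x₂x₃² + a·t₂ + b·t₃, m x₂, m x₃), where tᵢ = Σ_{k=1}^{m−1} (xᵢ, k·xᵢ)_p. -/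
/-- The overflow indicator on `ZMod n`: `1` if the sum of the representatives
in `{0, …, n-1}` is at least `n`, `0` otherwise. -/
def ovf {n : ℕ} [NeZero n] (x y : ZMod n) : ℕ :=
  if n ≤ x.val + y.val then 1 else 0

/-- The multiplication of the loop `Terg(Z_n; a, b)` on `(ZMod n)³`. -/
def tergMul {n : ℕ} [NeZero n] (a b : ZMod n)
    (x y : ZMod n × ZMod n × ZMod n) : ZMod n × ZMod n × ZMod n :=
  (x.1 + y.1 + (x.2.1 + y.2.1) * x.2.2 * y.2.2 + a * (ovf x.2.1 y.2.1 : ZMod n)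
      + b * (ovf x.2.2 y.2.2 : ZMod n),
    x.2.1 + y.2.1, x.2.2 + y.2.2)

/-- `m`-th power in `Terg(Z_n; a, b)` (well defined by power-associativity). -/
def tergPow {n : ℕ} [NeZero n] (a b : ZMod n)
    (x : ZMod n × ZMod n × ZMod n) : ℕ → ZMod n × ZMod n × ZMod n
  | 0 => (0, 0, 0)
  | m + 1 => tergMul a b x (tergPow a b x m)

lemma ovf_zero_right {n : ℕ} [NeZero n] (x : ZMod n) : ovf x 0 = 0 := by
  simp [ovf, ZMod.val_zero, Nat.not_le.mpr x.val_lt]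

lemma choose2 (m : ℕ) : 2 * (m + 1).choose 2 = m * (m + 1) := by
  induction m with
  | zero => rfl
  | succ k ih =>
      rw [show (k + 1 + 1).choose 2 = (k + 1).choose 1 + (k + 1).choose 2 from
        Nat.choose_succ_succ _ _, Nat.mul_add, ih, Nat.choose_one_right]
      ring

lemma choose3 (m : ℕ) : 2 * (m + 2).choose 3 = 2 * (m + 1).choose 3 + m * (m + 1) := by
  rw [show (m + 2).choose 3 = (m + 1).choose 2 + (m + 1).choose 3 from
    Nat.choose_succ_succ _ _, Nat.mul_add, choose2]
  ring

lemma sum_step (f : ℕ → ℕ) (hf0 : f 0 = 0) (m : ℕ) :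
    ∑ k ∈ Finset.Icc 1 m, f k = ∑ k ∈ Finset.Icc 1 (m - 1), f k + f m := by
  cases m with
  | zero => simp [hf0]
  | succ k => rw [Finset.sum_Icc_succ_top (by omega)]; simp

theorem stmt_17 (p : ℕ) [NeZero p] (hp : p.Prime) (hodd : Odd p)
    (a b : ZMod p) (x : ZMod p × ZMod p × ZMod p) (m : ℕ) :
    tergPow a b x m =
      ((m : ZMod p) * x.1 + 2 * ((m + 1).choose 3 : ZMod p) * x.2.1 * x.2.2 ^ 2
          + a * ((∑ k ∈ Finset.Icc 1 (m - 1), ovf x.2.1 ((k : ZMod p) * x.2.1) : ℕ) : ZMod p)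
          + b * ((∑ k ∈ Finset.Icc 1 (m - 1), ovf x.2.2 ((k : ZMod p) * x.2.2) : ℕ) : ZMod p),
        (m : ZMod p) * x.2.1, (m : ZMod p) * x.2.2) := by
  induction m with
  | zero => simp [tergPow, show Nat.choose 1 3 = 0 from rfl]
  | succ m ih =>
      rw [tergPow, ih, tergMul]
      have h2 : ∑ k ∈ Finset.Icc 1 (m + 1 - 1), ovf x.2.1 ((k : ZMod p) * x.2.1)
          = ∑ k ∈ Finset.Icc 1 (m - 1), ovf x.2.1 ((k : ZMod p) * x.2.1)
            + ovf x.2.1 ((m : ZMod p) * x.2.1) := by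
        simpa using sum_step (fun k => ovf x.2.1 ((k : ZMod p) * x.2.1))
          (by simpa using ovf_zero_right x.2.1) m
      have h3 : ∑ k ∈ Finset.Icc 1 (m + 1 - 1), ovf x.2.2 ((k : ZMod p) * x.2.2)
          = ∑ k ∈ Finset.Icc 1 (m - 1), ovf x.2.2 ((k : ZMod p) * x.2.2)
            + ovf x.2.2 ((m : ZMod p) * x.2.2) := by
        simpa using sum_step (fun k => ovf x.2.2 ((k : ZMod p) * x.2.2))
          (by simpa using ovf_zero_right x.2.2) m
      have hc : (2 : ZMod p) * ((m + 2).choose 3 : ℕ)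
          = 2 * ((m + 1).choose 3 : ℕ) + (m : ZMod p) * ((m : ZMod p) + 1) := by
        have := congrArg (Nat.cast (R := ZMod p)) (choose3 m)
        push_cast at this ⊢
        linear_combination this
      refine Prod.ext ?_ (Prod.ext ?_ ?_)
      · show _ = _
        rw [h2, h3]
        push_cast
        linear_combination (-(x.2.1 * x.2.2 ^ 2)) * hc
      · show x.2.1 + (m : ZMod p) * x.2.1 = _; push_cast; ring
      · show x.2.2 + (m : ZMod p) * x.2.2 = _; push_cast; ring
end

section
/- Let p be an odd prime and a₁, a₂ ∈ Z_p^* such that a₁a₂⁻¹ is a quadratic residue mod p. Then the map φ(x₁,x₂,x₃) = (u²x₁, x₂, u x₃), where u² = a₂a₁⁻¹, is an isomorphism from Terg(Z_p; a₁, 0) to Terg(Z_p; a₂, 0). -/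
theorem stmt_18 (p : ℕ) [NeZero p] (hp : p.Prime) (hodd : Odd p)
    (a₁ a₂ : ZMod p) (ha₁ : a₁ ≠ 0) (ha₂ : a₂ ≠ 0)
    (u : ZMod p) (hu : u ^ 2 = a₂ * a₁⁻¹) :
    Function.Bijective
        (fun x : ZMod p × ZMod p × ZMod p => (u ^ 2 * x.1, x.2.1, u * x.2.2)) ∧
      ∀ x y : ZMod p × ZMod p × ZMod p,
        (fun x : ZMod p × ZMod p × ZMod p => (u ^ 2 * x.1, x.2.1, u * x.2.2))
            (tergMul a₁ 0 x y) =
          tergMul a₂ 0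
            ((u ^ 2 * x.1, x.2.1, u * x.2.2)) ((u ^ 2 * y.1, y.2.1, u * y.2.2)) := by
  haveI : Fact p.Prime := ⟨hp⟩
  have hu0 : u ≠ 0 := by
    intro h
    rw [h] at hu
    exact ha₂ (by field_simp at hu; simpa using hu.symm)
  have hua : u ^ 2 * a₁ = a₂ := by
    rw [hu, mul_assoc, inv_mul_cancel₀ ha₁, mul_one]
  constructor
  · constructor
    · rintro ⟨x1, x2, x3⟩ ⟨y1, y2, y3⟩ h
      simp only [Prod.mk.injEq] at h
      obtain ⟨h1, h2, h3⟩ := h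
      have hu2 : u ^ 2 ≠ 0 := pow_ne_zero _ hu0
      exact Prod.ext (mul_left_cancel₀ hu2 h1)
        (Prod.ext h2 (mul_left_cancel₀ hu0 h3))
    · rintro ⟨y1, y2, y3⟩
      refine ⟨((u ^ 2)⁻¹ * y1, y2, u⁻¹ * y3), ?_⟩
      refine Prod.ext ?_ (Prod.ext rfl ?_) <;> field_simp
  · intro x y
    simp only [tergMul]
    refine Prod.ext ?_ (Prod.ext rfl (mul_add u _ _))
    rw [ovf]
    split <;> push_cast <;> ring_nf <;>
      · rw [show u ^ 2 * a₁ = a₂ from hua] <;> ring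
end

section
/- Let n > 0 and b, c be invertible elements of Z_n. Then the map φ(x₁,x₂,x₃) = ((c/b)x₁, (c/b)x₂, x₃) is an isomorphism from Terg(Z_n; 0, b) to Terg(Z_n; 0, c). -/
theorem stmt_19 (n : ℕ) [NeZero n] (b c : ZMod n)
    (b' : ZMod n) (hb : b * b' = 1) (hc : IsUnit c) :
    Function.Bijective
        (fun x : ZMod n × ZMod n × ZMod n => (c * b' * x.1, c * b' * x.2.1, x.2.2)) ∧
      ∀ x y : ZMod n × ZMod n × ZMod n,
        (fun x : ZMod n × ZMod n × ZMod n => (c * b' * x.1, c * b' * x.2.1, x.2.2))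
            (tergMul 0 b x y) =
          tergMul 0 c (c * b' * x.1, c * b' * x.2.1, x.2.2)
            (c * b' * y.1, c * b' * y.2.1, y.2.2) := by
  obtain ⟨cu, hcu⟩ := hc
  have hv : c * (↑cu⁻¹ : ZMod n) = 1 := by
    rw [← hcu]; exact_mod_cast cu.mul_inv
  set v : ZMod n := b * (↑cu⁻¹ : ZMod n) with hvdef
  have hinv : (c * b') * v = 1 := by
    rw [hvdef]; linear_combination c * (↑cu⁻¹ : ZMod n) * hb + hv
  have hinv' : v * (c * b') = 1 := by rw [mul_comm]; exact hinv
  constructor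
  · apply Function.bijective_iff_has_inverse.2
    refine ⟨fun x => (v * x.1, v * x.2.1, x.2.2), ?_, ?_⟩
    · intro x
      simp only [← mul_assoc, hinv', one_mul]
    · intro x
      simp only [← mul_assoc, hinv, one_mul]
  · intro x y
    simp only [tergMul, Prod.mk.injEq]
    refine ⟨?_, by ring, trivial⟩
    linear_combination ((ovf x.2.2 y.2.2 : ZMod n)) * c * hb
end
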